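/- arXiv:math/0205096 — 2 statements merged into one kernel-verified Lean document; each statement's English description precedes it below -/
import Mathlib

section
/- Let f(z) = Σ_{k=0}^∞ a_k z^k be a power series with complex coefficients converging for all z in the open unit disk, let N ∈ ℕ and B > 0 satisfy |a_k| ≤ B · max_{0≤j≤N} |a_j| for every k > N, assume a_j ≠ 0 for some j ≤ N, and let R₀ := 1/(B·2^{30N} + 1). Then for every 0 < r < R₀/2, the number of zeros of f in the closed disk {|z| ≤ r}, counted with multiplicities, is at most N. -/
open Filter Topology Metric
open scoped Classical

/-- Order of vanishing of `f` at `z` (junk value `0` if `f` is not analytic at `z`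
or vanishes identically near `z`). -/
noncomputable def vanishingOrder (f : ℂ → ℂ) (z : ℂ) : ℕ :=
  if h : AnalyticAt ℂ f z then (analyticOrderAt f z).toNat else 0

/-- The number of zeros of `f`, counted with multiplicities, in the closed disk of radius `r`. -/
noncomputable def numZeros (f : ℂ → ℂ) (r : ℝ) : ℕ :=
  ∑ᶠ z ∈ closedBall (0 : ℂ) r, vanishingOrder f z

namespace ZeroCountAux

/-- The sum function of a power series. -/
noncomputable def F (a : ℕ → ℂ) : ℂ → ℂ := fun z => ∑' k : ℕ, a k * z ^ k

/-- Convergence of the power series on the open unit disk. -/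
def Conv (a : ℕ → ℂ) : Prop := ∀ z ∈ ball (0 : ℂ) 1, Summable fun k : ℕ => a k * z ^ k

/-- The coefficients of `F a / (z - w)` when `F a w = 0`. -/
noncomputable def shift (a : ℕ → ℂ) (w : ℂ) : ℕ → ℂ := fun k => ∑' m : ℕ, a (k + 1 + m) * w ^ m

lemma bound_of_conv {a : ℕ → ℂ} (ha : Conv a) {ρ : ℝ} (h0 : 0 ≤ ρ) (h1 : ρ < 1) :
    ∃ C : ℝ, 0 < C ∧ ∀ j, ‖a j‖ * ρ ^ j ≤ C := by
  have hmem : (ρ : ℂ) ∈ ball (0 : ℂ) 1 := by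
    simp only [mem_ball, Complex.dist_eq, sub_zero, Complex.norm_real, Real.norm_eq_abs, abs_of_nonneg h0]
    exact h1
  have hsum := ha _ hmem
  have htend : Tendsto (fun k => ‖a k‖ * ρ ^ k) atTop (𝓝 0) := by
    have h2 : Tendsto (fun k => ‖a k * (ρ : ℂ) ^ k‖) atTop (𝓝 ‖(0 : ℂ)‖) :=
      hsum.tendsto_atTop_zero.norm
    simpa [norm_mul, norm_pow, Complex.norm_real, Real.norm_eq_abs, abs_of_nonneg h0] using h2
  obtain ⟨C, hC⟩ := htend.bddAbove_range
  refine ⟨C + 1, ?_, fun j => ?_⟩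
  · have h0'' : ‖a 0‖ * ρ ^ 0 ≤ C := hC ⟨0, rfl⟩
    have h0' : (0 : ℝ) ≤ ‖a 0‖ * ρ ^ 0 := by positivity
    linarith
  · have h0'' : ‖a j‖ * ρ ^ j ≤ C := hC ⟨j, rfl⟩
    linarith

lemma analyticOnNhd_F {a : ℕ → ℂ} (ha : Conv a) :
    AnalyticOnNhd ℂ (F a) (ball (0 : ℂ) 1) := by
  intro u hu
  have hu1 : ‖u‖ < 1 := by simpa [Complex.dist_eq] using hu
  set ρ : ℝ := (1 + ‖u‖) / 2 with hρ
  have hρ0 : 0 ≤ ρ := by positivity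
  have hρ1 : ρ < 1 := by rw [hρ]; linarith
  have hρu : ‖u‖ < ρ := by rw [hρ]; linarith
  obtain ⟨C, hC0, hC⟩ := bound_of_conv ha hρ0 hρ1
  set p := FormalMultilinearSeries.ofScalars ℂ a with hp
  have hrad : (ρ.toNNReal : ENNReal) ≤ p.radius := by
    apply p.le_radius_of_bound C
    intro n
    have : ‖p n‖ = ‖a n‖ := by
      rw [hp, FormalMultilinearSeries.ofScalars_norm]
    rw [this, Real.coe_toNNReal _ hρ0]
    exact hC n
  have hpos : 0 < p.radius := by
    refine lt_of_lt_of_le ?_ hrad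
    have : (0 : ℝ) < ρ := by rw [hρ]; positivity
    simpa using (Real.toNNReal_pos.mpr this)
  have hsum : p.sum = F a := by
    funext x
    have := FormalMultilinearSeries.ofScalars_sum_eq a x
    simpa [FormalMultilinearSeries.ofScalarsSum, smul_eq_mul, F, hp] using this
  have hball : HasFPowerSeriesOnBall (F a) p 0 p.radius := by
    rw [← hsum]; exact p.hasFPowerSeriesOnBall hpos
  apply hball.analyticAt_of_mem
  rw [EMetric.mem_ball, edist_zero_right, enorm_eq_nnnorm]
  refine lt_of_lt_of_le ?_ hrad
  rw [ENNReal.coe_lt_coe, ← NNReal.coe_lt_coe, coe_nnnorm, Real.coe_toNNReal _ hρ0]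
  exact hρu

lemma shift_abs_summable {a : ℕ → ℂ} (ha : Conv a) {w : ℂ} (hw : ‖w‖ ≤ 1 / 2) (k : ℕ) :
    Summable (fun m : ℕ => ‖a (k + 1 + m)‖ * ‖w‖ ^ m) := by
  obtain ⟨C, hC0, hC⟩ := bound_of_conv ha (by norm_num : (0:ℝ) ≤ 3/4) (by norm_num)
  have hbound : ∀ j, ‖a j‖ ≤ C * (4/3 : ℝ) ^ j := by
    intro j
    have h1 := hC j
    have h2 : (0:ℝ) < (3/4 : ℝ) ^ j := by positivity
    rw [← le_div_iff₀ h2] at h1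
    have h3 : C / (3/4:ℝ) ^ j = C * (4/3 : ℝ) ^ j := by
      rw [div_eq_mul_inv, ← inv_pow]
      norm_num
    rw [h3] at h1
    exact h1
  refine Summable.of_nonneg_of_le (fun m => by positivity) (fun m => ?_)
    ((summable_geometric_of_lt_one (r := (2/3:ℝ)) (by norm_num) (by norm_num)).mul_left
      (C * (4/3:ℝ) ^ (k+1)))
  · have h1 : ‖a (k+1+m)‖ ≤ C * (4/3:ℝ) ^ (k+1+m) := hbound _
    have h2 : ‖w‖ ^ m ≤ (1/2 : ℝ) ^ m :=
      pow_le_pow_left₀ (norm_nonneg _) hw m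
    calc ‖a (k+1+m)‖ * ‖w‖ ^ m
        ≤ (C * (4/3:ℝ) ^ (k+1+m)) * (1/2:ℝ) ^ m := by
          apply mul_le_mul h1 h2 (by positivity) (by positivity)
      _ = (C * (4/3:ℝ) ^ (k+1)) * (2/3 : ℝ) ^ m := by
          have hmm : (4/3:ℝ) ^ m * (1/2:ℝ) ^ m = (2/3:ℝ) ^ m := by
            rw [← mul_pow]; norm_num
          rw [pow_add]
          linear_combination (C * (4/3:ℝ) ^ (k+1)) * hmm

lemma shift_summable {a : ℕ → ℂ} (ha : Conv a) {w : ℂ} (hw : ‖w‖ ≤ 1 / 2) (k : ℕ) :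
    Summable (fun m : ℕ => a (k + 1 + m) * w ^ m) := by
  apply Summable.of_norm
  have := shift_abs_summable ha hw k
  apply this.congr
  intro m
  rw [norm_mul, norm_pow]

lemma abs_shift_le {a : ℕ → ℂ} (ha : Conv a) {w : ℂ} {r T : ℝ}
    (hw : ‖w‖ ≤ r) (hr : r ≤ 1 / 2) (hr0 : 0 ≤ r) (hT : 0 ≤ T) {k : ℕ}
    (hcoef : ∀ m : ℕ, ‖a (k + 1 + m)‖ ≤ T) :
    ‖shift a w k‖ ≤ 2 * T := by
  have hw2 : ‖w‖ ≤ 1/2 := le_trans hw hr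
  have hs := shift_abs_summable ha hw2 k
  have hgeo : Summable (fun m : ℕ => T * r ^ m) :=
    (summable_geometric_of_lt_one hr0 (by linarith)).mul_left _
  have h1 : ‖shift a w k‖ ≤ ∑' m : ℕ, ‖a (k+1+m)‖ * ‖w‖ ^ m := by
    rw [shift]
    have := norm_tsum_le_tsum_norm (f := fun m : ℕ => a (k+1+m) * w ^ m) (by
      apply hs.congr; intro m; rw [norm_mul, norm_pow])
    simpa [norm_mul, norm_pow] using this
  have h2 : ∑' m : ℕ, ‖a (k+1+m)‖ * ‖w‖ ^ m ≤ ∑' m : ℕ, T * r ^ m := by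
    apply Summable.tsum_le_tsum _ hs hgeo
    intro m
    exact mul_le_mul (hcoef m) (pow_le_pow_left₀ (norm_nonneg _) hw m)
      (by positivity) hT
  have h3 : ∑' m : ℕ, T * r ^ m = T * (1 - r)⁻¹ := by
    rw [tsum_mul_left, tsum_geometric_of_lt_one hr0 (by linarith)]
  have h4 : (1 - r)⁻¹ ≤ 2 := by
    rw [inv_le_comm₀ (by linarith) (by norm_num)]
    linarith
  have h5 : T * (1 - r)⁻¹ ≤ T * 2 := by
    apply mul_le_mul_of_nonneg_left h4 hT
  linarith

lemma conv_shift {a : ℕ → ℂ} (ha : Conv a) {w : ℂ} (hw : ‖w‖ ≤ 1 / 2) :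
    Conv (shift a w) := by
  intro z hz
  have hz1 : ‖z‖ < 1 := by simpa [Complex.dist_eq] using hz
  set ρ : ℝ := max ((1 + ‖z‖) / 2) (3/4) with hρ
  have hρ34 : (3/4 : ℝ) ≤ ρ := le_max_right _ _
  have hρ0 : 0 < ρ := by linarith
  have hρ1 : ρ < 1 := by
    rw [hρ]; apply max_lt (by linarith) (by norm_num)
  have hρz : ‖z‖ < ρ := lt_of_lt_of_le (by linarith [le_max_left ((1 + ‖z‖) / 2) (3/4:ℝ)]) le_rfl
  obtain ⟨C, hC0, hC⟩ := bound_of_conv ha hρ0.le hρ1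
  have hbound : ∀ j, ‖a j‖ ≤ C * (ρ⁻¹) ^ j := by
    intro j
    have h1 := hC j
    have h2 : (0:ℝ) < ρ ^ j := by positivity
    rw [← le_div_iff₀ h2] at h1
    have h3 : C / ρ ^ j = C * ρ⁻¹ ^ j := by
      rw [div_eq_mul_inv, ← inv_pow]
    rw [h3] at h1
    exact h1
  have hρinv : ρ⁻¹ ≤ 4/3 := by
    rw [inv_le_comm₀ hρ0 (by norm_num)]
    linarith
  have hshift_bound : ∀ k, ‖shift a w k‖ ≤ (3 * C * ρ⁻¹) * (ρ⁻¹) ^ k := by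
    intro k
    have hs := shift_abs_summable ha hw k
    have hgeo : Summable (fun m : ℕ => (C * (ρ⁻¹) ^ (k+1)) * (2/3 : ℝ) ^ m) :=
      (summable_geometric_of_lt_one (by norm_num) (by norm_num)).mul_left _
    have hterm : ∀ m : ℕ, ‖a (k+1+m)‖ * ‖w‖ ^ m
        ≤ (C * (ρ⁻¹) ^ (k+1)) * (2/3 : ℝ) ^ m := by
      intro m
      have h1 : ‖a (k+1+m)‖ ≤ C * (ρ⁻¹) ^ (k+1+m) := hbound _
      have h2 : ‖w‖ ^ m ≤ (1/2 : ℝ) ^ m :=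
        pow_le_pow_left₀ (norm_nonneg _) hw m
      have h3 : (ρ⁻¹) ^ m * (1/2:ℝ) ^ m ≤ (2/3 : ℝ) ^ m := by
        rw [← mul_pow]
        apply pow_le_pow_left₀ (by positivity)
        calc ρ⁻¹ * (1/2 : ℝ) ≤ (4/3) * (1/2) := by
              apply mul_le_mul_of_nonneg_right hρinv (by norm_num)
          _ = 2/3 := by norm_num
      calc ‖a (k+1+m)‖ * ‖w‖ ^ m
          ≤ (C * (ρ⁻¹) ^ (k+1+m)) * (1/2:ℝ) ^ m :=
            mul_le_mul h1 h2 (by positivity) (by positivity)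
        _ = (C * (ρ⁻¹) ^ (k+1)) * ((ρ⁻¹) ^ m * (1/2:ℝ) ^ m) := by
            rw [pow_add]; ring
        _ ≤ (C * (ρ⁻¹) ^ (k+1)) * (2/3:ℝ) ^ m := by
            apply mul_le_mul_of_nonneg_left h3 (by positivity)
    have h1 : ‖shift a w k‖
        ≤ ∑' m : ℕ, ‖a (k+1+m)‖ * ‖w‖ ^ m := by
      rw [shift]
      have := norm_tsum_le_tsum_norm (f := fun m : ℕ => a (k+1+m) * w ^ m) (by
        apply hs.congr; intro m; rw [norm_mul, norm_pow])
      simpa [norm_mul, norm_pow] using this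
    have h2 : ∑' m : ℕ, ‖a (k+1+m)‖ * ‖w‖ ^ m
        ≤ ∑' m : ℕ, (C * (ρ⁻¹) ^ (k+1)) * (2/3 : ℝ) ^ m :=
      Summable.tsum_le_tsum hterm hs hgeo
    have h3 : ∑' m : ℕ, (C * (ρ⁻¹) ^ (k+1)) * (2/3 : ℝ) ^ m
        = (C * (ρ⁻¹) ^ (k+1)) * 3 := by
      rw [tsum_mul_left, tsum_geometric_of_lt_one (by norm_num) (by norm_num)]
      norm_num
    have h4 : (C * (ρ⁻¹) ^ (k+1)) * 3 = (3 * C * ρ⁻¹) * (ρ⁻¹) ^ k := by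
      rw [pow_succ]; ring
    linarith
  apply Summable.of_norm_bounded (g := fun k => (3 * C * ρ⁻¹) * (‖z‖ * ρ⁻¹) ^ k)
  · apply Summable.mul_left
    apply summable_geometric_of_lt_one (by positivity)
    rw [← div_eq_mul_inv, div_lt_one hρ0]
    exact hρz
  · intro k
    rw [norm_mul, norm_pow]
    calc ‖shift a w k‖ * ‖z‖ ^ k
        ≤ ((3 * C * ρ⁻¹) * (ρ⁻¹) ^ k) * ‖z‖ ^ k := by
          apply mul_le_mul_of_nonneg_right (hshift_bound k)
          · positivity
      _ = (3 * C * ρ⁻¹) * (‖z‖ * ρ⁻¹) ^ k := by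
          rw [mul_pow]; ring

lemma shift_rec {a : ℕ → ℂ} (ha : Conv a) {w : ℂ} (hw : ‖w‖ ≤ 1 / 2) (k : ℕ) :
    shift a w k = a (k + 1) + w * shift a w (k + 1) := by
  have hs := shift_summable ha hw k
  rw [shift, Summable.tsum_eq_zero_add hs]
  congr 1
  · simp
  · have : ∀ m : ℕ, a (k + 1 + (m + 1)) * w ^ (m + 1) = w * (a (k + 1 + 1 + m) * w ^ m) := by
      intro m
      rw [show k + 1 + (m + 1) = k + 1 + 1 + m by omega, pow_succ]
      ring
    rw [tsum_congr this, tsum_mul_left]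
    rfl

lemma shift_zero_eq {a : ℕ → ℂ} (ha : Conv a) {w : ℂ} (hw : ‖w‖ ≤ 1 / 2)
    (hfw : F a w = 0) : a 0 = -(w * shift a w 0) := by
  have hwb : w ∈ ball (0 : ℂ) 1 := by
    simp only [mem_ball, Complex.dist_eq, sub_zero]
    calc ‖w‖ ≤ 1/2 := hw
      _ < 1 := by norm_num
  have hs := ha w hwb
  have h1 : F a w = a 0 + w * shift a w 0 := by
    rw [F, Summable.tsum_eq_zero_add hs]
    congr 1
    · simp
    · have : ∀ k : ℕ, a (k + 1) * w ^ (k + 1) = w * (a (0 + 1 + k) * w ^ k) := by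
        intro k
        rw [show (0:ℕ) + 1 + k = k + 1 by omega, pow_succ]
        ring
      rw [tsum_congr this, tsum_mul_left]
      rfl
  rw [hfw] at h1
  linear_combination -h1

lemma factor_eq {a : ℕ → ℂ} (ha : Conv a) {w : ℂ} (hw : ‖w‖ ≤ 1 / 2)
    (hfw : F a w = 0) :
    ∀ z ∈ ball (0 : ℂ) 1, F a z = (z - w) * F (shift a w) z := by
  intro z hz
  set b := shift a w with hb
  have hconvb : Conv b := conv_shift ha hw
  have hsb : Summable fun k : ℕ => b k * z ^ k := hconvb z hz
  have hsb1 : Summable fun k : ℕ => b (k + 1) * z ^ (k + 1) :=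
    (summable_nat_add_iff (f := fun k : ℕ => b k * z ^ k) 1).2 hsb
  have hsa : Summable fun k : ℕ => a k * z ^ k := ha z hz
  have key : ∀ k : ℕ, a (k + 1) * z ^ (k + 1)
      = (b k * z ^ k) * z - w * (b (k + 1) * z ^ (k + 1)) := by
    intro k
    have := shift_rec ha hw k
    rw [← hb] at this
    calc a (k + 1) * z ^ (k + 1) = (b k - w * b (k+1)) * z ^ (k+1) := by
          rw [this]; ring
      _ = (b k * z ^ k) * z - w * (b (k + 1) * z ^ (k + 1)) := by
          rw [pow_succ]; ring
  have hFa : F a z = a 0 + ∑' k : ℕ, a (k + 1) * z ^ (k + 1) := by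
    rw [F, Summable.tsum_eq_zero_add hsa]
    simp
  have hsum1 : Summable fun k : ℕ => (b k * z ^ k) * z := hsb.mul_right z
  have hsum2 : Summable fun k : ℕ => w * (b (k + 1) * z ^ (k + 1)) := hsb1.mul_left w
  have h2 : ∑' k : ℕ, a (k + 1) * z ^ (k + 1)
      = (∑' k : ℕ, (b k * z ^ k) * z) - ∑' k : ℕ, w * (b (k + 1) * z ^ (k + 1)) := by
    rw [← Summable.tsum_sub hsum1 hsum2]
    exact tsum_congr key
  have h3 : ∑' k : ℕ, (b k * z ^ k) * z = (F b z) * z := by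
    rw [F, tsum_mul_right]
  have h4 : ∑' k : ℕ, w * (b (k + 1) * z ^ (k + 1)) = w * (F b z - b 0) := by
    rw [tsum_mul_left]
    congr 1
    have : F b z = b 0 + ∑' k : ℕ, b (k + 1) * z ^ (k + 1) := by
      rw [F, Summable.tsum_eq_zero_add hsb]
      simp
    rw [this]; ring
  have h5 : a 0 = -(w * b 0) := shift_zero_eq ha hw hfw
  rw [hFa, h2, h3, h4, h5]
  ring

lemma vanishingOrder_eq_zero_of_ne {f : ℂ → ℂ} {u : ℂ} (h : f u ≠ 0) :
    vanishingOrder f u = 0 := by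
  rw [vanishingOrder]
  split_ifs with hA
  · have : analyticOrderAt f u = (0 : ℕ) := by
      rw [hA.analyticOrderAt_eq_natCast]
      exact ⟨f, hA, h, by simp⟩
    rw [this]
    rfl
  · rfl

lemma order_factor {f g : ℂ → ℂ} {w u : ℂ}
    (hf : AnalyticAt ℂ f u) (hg : AnalyticAt ℂ g u)
    (heq : ∀ᶠ z in 𝓝 u, f z = (z - w) * g z) :
    analyticOrderAt f u = (if u = w then (1 : ℕ∞) else 0) + analyticOrderAt g u := by
  rcases eq_top_or_lt_top (analyticOrderAt g u) with htop | hlt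
  · have hgz : ∀ᶠ z in 𝓝 u, g z = 0 := analyticOrderAt_eq_top.mp htop
    have hfz : ∀ᶠ z in 𝓝 u, f z = 0 := by
      filter_upwards [heq, hgz] with z h1 h2
      rw [h1, h2, mul_zero]
    rw [analyticOrderAt_eq_top.mpr hfz, htop]
    simp
  · set n := (analyticOrderAt g u).toNat with hndef
    have hn : (n : ℕ∞) = analyticOrderAt g u := ENat.coe_toNat hlt.ne
    obtain ⟨h, hhan, hhne, hhev⟩ := (hg.analyticOrderAt_eq_natCast (n := n)).mp hn.symm
    by_cases huw : u = w
    · subst huw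
      have : analyticOrderAt f u = ((n + 1 : ℕ) : ℕ∞) := by
        rw [hf.analyticOrderAt_eq_natCast]
        refine ⟨h, hhan, hhne, ?_⟩
        filter_upwards [heq, hhev] with z h1 h2
        rw [h1, h2, smul_eq_mul, smul_eq_mul, pow_succ]
        ring
      rw [this, ← hn, if_pos rfl, Nat.cast_add, Nat.cast_one]
      exact add_comm _ _
    · have : analyticOrderAt f u = (n : ℕ∞) := by
        rw [hf.analyticOrderAt_eq_natCast]
        refine ⟨fun z => (z - w) * h z, ?_, ?_, ?_⟩
        · exact ((analyticAt_id.sub analyticAt_const).mul hhan)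
        · exact mul_ne_zero (sub_ne_zero.mpr huw) hhne
        · filter_upwards [heq, hhev] with z h1 h2
          rw [h1, h2, smul_eq_mul, smul_eq_mul]
          ring
      rw [this, ← hn, if_neg huw, zero_add]

lemma numZeros_succ {a : ℕ → ℂ} (ha : Conv a) {r : ℝ} (hr0 : 0 < r) (hr : r ≤ 1 / 2)
    (hn : 1 ≤ numZeros (F a) r) :
    ∃ w ∈ closedBall (0 : ℂ) r, ‖w‖ ≤ 1 / 2 ∧ F a w = 0 ∧
      numZeros (F a) r ≤ numZeros (F (shift a w)) r + 1 := by
  set S := closedBall (0 : ℂ) r with hS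
  have hSb : S ⊆ ball (0 : ℂ) 1 := by
    intro x hx
    simp only [hS, mem_closedBall, mem_ball] at hx ⊢
    linarith
  have hA := analyticOnNhd_F ha
  -- extract a zero
  have hzero : ∃ w ∈ S, F a w = 0 := by
    by_contra hcon
    push_neg at hcon
    have hvz : ∀ u ∈ S, vanishingOrder (F a) u = 0 := fun u hu =>
      vanishingOrder_eq_zero_of_ne (hcon u hu)
    have : numZeros (F a) r = 0 := by
      rw [numZeros, finsum_mem_def]
      have : S.indicator (vanishingOrder (F a)) = fun _ => 0 := by
        funext u
        by_cases hu : u ∈ S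
        · rw [Set.indicator_of_mem hu]; exact hvz u hu
        · rw [Set.indicator_of_notMem hu]
      rw [this]
      exact finsum_zero
    omega
  obtain ⟨w, hwS, hfw⟩ := hzero
  have hwabs : ‖w‖ ≤ 1/2 := by
    have : dist w 0 ≤ r := hwS
    rw [Complex.dist_eq, sub_zero] at this
    linarith
  refine ⟨w, hwS, hwabs, hfw, ?_⟩
  by_cases hall : ∀ z ∈ ball (0 : ℂ) 1, F a z = 0
  · -- f vanishes identically: numZeros = 0
    exfalso
    have hvz : ∀ u ∈ S, vanishingOrder (F a) u = 0 := by
      intro u hu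
      have hAu := hA u (hSb hu)
      rw [vanishingOrder, dif_pos hAu]
      have : analyticOrderAt (F a) u = ⊤ := by
        rw [analyticOrderAt_eq_top]
        filter_upwards [isOpen_ball.eventually_mem (hSb hu)] with z hz
        exact hall z hz
      rw [this]
      rfl
    have : numZeros (F a) r = 0 := by
      rw [numZeros, finsum_mem_def]
      have : S.indicator (vanishingOrder (F a)) = fun _ => 0 := by
        funext u
        by_cases hu : u ∈ S
        · rw [Set.indicator_of_mem hu]; exact hvz u hu
        · rw [Set.indicator_of_notMem hu]
      rw [this]
      exact finsum_zero
    omega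
  push_neg at hall
  obtain ⟨z₀, hz₀b, hz₀ne⟩ := hall
  set g := F (shift a w) with hg
  have hconvb : Conv (shift a w) := conv_shift ha hwabs
  have hgA := analyticOnNhd_F hconvb
  have hfac : ∀ z ∈ ball (0 : ℂ) 1, F a z = (z - w) * g z := factor_eq ha hwabs hfw
  have hpre : IsPreconnected (ball (0 : ℂ) 1) := (convex_ball (0:ℂ) 1).isPreconnected
  have horderf : ∀ u, u ∈ ball (0 : ℂ) 1 → ∀ h : AnalyticAt ℂ (F a) u, analyticOrderAt (F a) u ≠ ⊤ := by
    intro u hu h htop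
    have hev : F a =ᶠ[𝓝 u] 0 := analyticOrderAt_eq_top.mp htop
    have := hA.eqOn_zero_of_preconnected_of_eventuallyEq_zero hpre hu hev
    exact hz₀ne (this hz₀b)
  have horderg : ∀ u, u ∈ ball (0 : ℂ) 1 → ∀ h : AnalyticAt ℂ g u, analyticOrderAt g u ≠ ⊤ := by
    intro u hu h htop
    have hev : ∀ᶠ z in 𝓝 u, g z = 0 := analyticOrderAt_eq_top.mp htop
    have hevf : ∀ᶠ z in 𝓝 u, F a z = 0 := by
      filter_upwards [hev, isOpen_ball.eventually_mem hu] with z h1 h2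
      rw [hfac z h2, h1, mul_zero]
    exact horderf u hu (hA u hu) (analyticOrderAt_eq_top.mpr hevf)
  have key : ∀ u ∈ S, vanishingOrder (F a) u
      = vanishingOrder g u + (if u = w then 1 else 0) := by
    intro u hu
    have hub := hSb hu
    have hAu := hA u hub
    have hGu := hgA u hub
    have hevfac : ∀ᶠ z in 𝓝 u, F a z = (z - w) * g z := by
      filter_upwards [isOpen_ball.eventually_mem hub] with z hz
      exact hfac z hz
    have hrel := order_factor hAu hGu hevfac
    have hm : (((analyticOrderAt g u).toNat : ℕ) : ℕ∞) = analyticOrderAt g u := ENat.coe_toNat (horderg u hub hGu)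
    set m := (analyticOrderAt g u).toNat with hmdef
    rw [vanishingOrder, dif_pos hAu, vanishingOrder, dif_pos hGu, hrel, ← hm]
    by_cases huw : u = w
    · rw [if_pos huw, if_pos huw]
      have h9 : (1 : ℕ∞) + (m : ℕ∞) = ((m + 1 : ℕ) : ℕ∞) := by
        rw [Nat.cast_add, Nat.cast_one]
        exact add_comm _ _
      rw [h9, ENat.toNat_coe, ENat.toNat_coe]
    · rw [if_neg huw, if_neg huw]
      rw [zero_add, ENat.toNat_coe]
      omega
  -- finsum bookkeeping
  set vf := vanishingOrder (F a) with hvf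
  set vg := vanishingOrder g with hvg
  have hnzf : numZeros (F a) r = ∑ᶠ u, S.indicator vf u := by
    rw [numZeros, finsum_mem_def]
  have hnzg : numZeros g r = ∑ᶠ u, S.indicator vg u := by
    rw [numZeros, finsum_mem_def]
  have hfin : (Function.support (S.indicator vf)).Finite := by
    by_contra hinf
    rw [hnzf, finsum_of_infinite_support hinf] at hn
    omega
  have hptw : S.indicator vf = fun u =>
      S.indicator vg u + S.indicator (fun u => if u = w then 1 else 0) u := by
    funext u
    by_cases hu : u ∈ S
    · rw [Set.indicator_of_mem hu, Set.indicator_of_mem hu, Set.indicator_of_mem hu]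
      exact key u hu
    · rw [Set.indicator_of_notMem hu, Set.indicator_of_notMem hu,
        Set.indicator_of_notMem hu]
      omega
  have hsub : Function.support (S.indicator vg) ⊆ Function.support (S.indicator vf) := by
    intro u hu
    rw [Function.mem_support] at hu ⊢
    by_cases huS : u ∈ S
    · rw [Set.indicator_of_mem huS] at hu ⊢
      have := key u huS
      omega
    · rw [Set.indicator_of_notMem huS] at hu
      exact absurd rfl hu
  have hfing : (Function.support (S.indicator vg)).Finite := hfin.subset hsub
  have hsubi : Function.support (S.indicator (fun u : ℂ => if u = w then 1 else 0)) ⊆ {w} := by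
    intro u hu
    rw [Function.mem_support] at hu
    by_cases huS : u ∈ S
    · rw [Set.indicator_of_mem huS] at hu
      by_cases huw : u = w
      · exact huw
      · rw [if_neg huw] at hu; exact absurd rfl hu
    · rw [Set.indicator_of_notMem huS] at hu
      exact absurd rfl hu
  have hfini : (Function.support (S.indicator (fun u : ℂ => if u = w then 1 else 0))).Finite :=
    (Set.finite_singleton w).subset hsubi
  have hsingle : ∑ᶠ u, S.indicator (fun u : ℂ => if u = w then 1 else 0) u = 1 := by
    rw [finsum_eq_single _ w]
    · rw [Set.indicator_of_mem hwS, if_pos rfl]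
    · intro x hx
      by_cases hxS : x ∈ S
      · rw [Set.indicator_of_mem hxS, if_neg hx]
      · rw [Set.indicator_of_notMem hxS]
  have : numZeros (F a) r = numZeros g r + 1 := by
    rw [hnzf, hnzg, hptw, finsum_add_distrib hfing hfini, hsingle]
  omega

lemma main_bound : ∀ (n : ℕ) (a : ℕ → ℂ) (r T M : ℝ), Conv a → 0 < r → r ≤ 1 / 2 → 0 ≤ T →
    (∀ k, n < k → ‖a k‖ ≤ T) → (∃ j, j ≤ n ∧ M ≤ ‖a j‖) →
    (n + 1 ≤ numZeros (F a) r) → M ≤ 2 * T * r * 6 ^ n := by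
  intro n
  induction n with
  | zero =>
    intro a r T M ha hr0 hr hT htail hhead hz
    obtain ⟨w, hwS, hwabs, hfw, -⟩ := numZeros_succ ha hr0 hr (by omega)
    obtain ⟨j, hj, hM⟩ := hhead
    have hj0 : j = 0 := Nat.le_zero.mp hj
    subst hj0
    have hid0 : a 0 = -(w * shift a w 0) := shift_zero_eq ha hwabs hfw
    have hwr : ‖w‖ ≤ r := by
      have : dist w 0 ≤ r := hwS
      rwa [Complex.dist_eq, sub_zero] at this
    have hb0 : ‖shift a w 0‖ ≤ 2 * T :=
      abs_shift_le ha hwr hr hr0.le hT (fun m => htail _ (by omega))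
    have : ‖a 0‖ ≤ r * (2 * T) := by
      rw [hid0, norm_neg, norm_mul]
      exact mul_le_mul hwr hb0 (norm_nonneg _) hr0.le
    calc M ≤ ‖a 0‖ := hM
      _ ≤ r * (2 * T) := this
      _ = 2 * T * r * 6 ^ 0 := by ring
  | succ n IH =>
    intro a r T M ha hr0 hr hT htail hhead hz
    obtain ⟨w, hwS, hwabs, hfw, hle⟩ := numZeros_succ ha hr0 hr (by omega)
    have hwr : ‖w‖ ≤ r := by
      have : dist w 0 ≤ r := hwS
      rwa [Complex.dist_eq, sub_zero] at this
    set b := shift a w with hb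
    have hconvb : Conv b := conv_shift ha hwabs
    have hz' : n + 1 ≤ numZeros (F b) r := by omega
    have htail' : ∀ k, n < k → ‖b k‖ ≤ 2 * T := by
      intro k hk
      exact abs_shift_le ha hwr hr hr0.le hT (fun m => htail _ (by omega))
    have hrec : ∀ k, a (k + 1) = b k - w * b (k + 1) := by
      intro k
      have := shift_rec ha hwabs k
      rw [← hb] at this
      rw [this]; ring
    have hid0 : a 0 = -(w * b 0) := by
      rw [hb]; exact shift_zero_eq ha hwabs hfw
    -- head bound for b
    have hhead' : ∃ j, j ≤ n ∧ (M - 2 * r * T) / 2 ≤ ‖b j‖ := by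
      by_cases hM2 : M - 2 * r * T ≤ 0
      · exact ⟨0, Nat.zero_le n, le_trans (by linarith) (norm_nonneg _)⟩
      push_neg at hM2
      obtain ⟨j, hj, hM⟩ := hhead
      rcases j with _ | k
      · refine ⟨0, Nat.zero_le n, ?_⟩
        have h1 : ‖a 0‖ = ‖w‖ * ‖b 0‖ := by
          rw [hid0, norm_neg, norm_mul]
        have h2 : ‖w‖ * ‖b 0‖ ≤ 1 * ‖b 0‖ := by
          apply mul_le_mul_of_nonneg_right _ (norm_nonneg _)
          linarith
        have h3 : M ≤ ‖b 0‖ := by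
          rw [h1] at hM; linarith
        have h4 : (0:ℝ) ≤ r * T := mul_nonneg hr0.le hT
        linarith
      · have hk : k ≤ n := by omega
        have hMk : M ≤ ‖b k‖ + ‖w‖ * ‖b (k+1)‖ := by
          calc M ≤ ‖a (k+1)‖ := hM
            _ = ‖b k - w * b (k+1)‖ := by rw [hrec k]
            _ ≤ ‖b k‖ + ‖w * b (k+1)‖ := by
                apply norm_sub_le
            _ = ‖b k‖ + ‖w‖ * ‖b (k+1)‖ := by
                rw [norm_mul]
        by_cases hkn : k = n
        · refine ⟨k, hk, ?_⟩
          have hbn1 : ‖b (k+1)‖ ≤ 2 * T := htail' (k+1) (by omega)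
          have h5 : ‖w‖ * ‖b (k+1)‖ ≤ r * (2 * T) :=
            mul_le_mul hwr hbn1 (norm_nonneg _) hr0.le
          have h6 : M - 2 * r * T ≤ ‖b k‖ := by nlinarith
          linarith [norm_nonneg (b k)]
        · have hk1 : k + 1 ≤ n := by omega
          have hMk2 : M ≤ ‖b k‖ + ‖b (k+1)‖ := by
            have : ‖w‖ * ‖b (k+1)‖ ≤ 1 * ‖b (k+1)‖ := by
              apply mul_le_mul_of_nonneg_right _ (norm_nonneg _)
              linarith
            linarith
          by_cases hbk : (M - 2*r*T)/2 ≤ ‖b k‖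
          · exact ⟨k, hk, hbk⟩
          · push_neg at hbk
            refine ⟨k+1, hk1, ?_⟩
            have h7 : M/2 ≤ ‖b (k+1)‖ := by
              have h8 : (0:ℝ) ≤ r * T := mul_nonneg hr0.le hT
              have hMle : (M - 2*r*T)/2 ≤ M/2 := by linarith
              linarith
            have h9 : (0:ℝ) ≤ r * T := mul_nonneg hr0.le hT
            linarith
    have hIH := IH b r (2*T) ((M - 2*r*T)/2) hconvb hr0 hr (by linarith) htail' hhead' hz'
    have h6 : (1:ℝ) ≤ 6 ^ n := by
      calc (1:ℝ) = 1 ^ n := (one_pow n).symm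
        _ ≤ 6 ^ n := pow_le_pow_left₀ (by norm_num) (by norm_num) n
    have hTr : (0:ℝ) ≤ T * r := mul_nonneg hT hr0.le
    have h7 : T * r * 1 ≤ T * r * 6 ^ n := mul_le_mul_of_nonneg_left h6 hTr
    have h8 : (6:ℝ) ^ (n+1) = 6 * 6 ^ n := by rw [pow_succ]; ring
    rw [h8]
    linarith [hIH, h7, hTr]

end ZeroCountAux

/-- **Zero bound**: with `R₀ = 1/(B⋅2^{30N}+1)`, for every `0 < r < R₀/2` the function `f` has
at most `N` zeros, counted with multiplicities, in the closed disk `|z| ≤ r`. -/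
theorem zero_count_le_N
    (a : ℕ → ℂ)
    (hconv : ∀ z ∈ ball (0 : ℂ) 1, Summable fun k : ℕ => a k * z ^ k)
    (N : ℕ) (B : ℝ) (hB : 0 < B)
    (hcoeff : ∀ k > N, ‖a k‖ ≤
      B * (Finset.range (N + 1)).sup' Finset.nonempty_range_add_one (fun j => ‖a j‖))
    (hne : ∃ j ≤ N, a j ≠ 0)
    (R₀ : ℝ) (hR₀ : R₀ = 1 / (B * 2 ^ (30 * N) + 1)) :
    ∀ r : ℝ, 0 < r → r < R₀ / 2 →
      numZeros (fun z => ∑' k : ℕ, a k * z ^ k) r ≤ N := by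
  intro r hr0 hr2
  set M : ℝ := (Finset.range (N + 1)).sup' Finset.nonempty_range_add_one
    (fun j => ‖a j‖) with hM
  have hMpos : 0 < M := by
    obtain ⟨j, hj, hja⟩ := hne
    calc (0:ℝ) < ‖a j‖ := norm_pos_iff.mpr hja
      _ ≤ M := by
        rw [hM]
        exact Finset.le_sup' (fun j => ‖a j‖) (Finset.mem_range.2 (by omega))
  have hhead : ∃ j, j ≤ N ∧ M ≤ ‖a j‖ := by
    obtain ⟨j, hj, hje⟩ := Finset.exists_mem_eq_sup' Finset.nonempty_range_add_one
      (fun j => ‖a j‖)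
    refine ⟨j, ?_, le_of_eq hje⟩
    have := Finset.mem_range.1 hj
    omega
  have hpow : (0:ℝ) < B * 2 ^ (30 * N) + 1 := by positivity
  have hR₀1 : R₀ ≤ 1 := by
    rw [hR₀, div_le_one hpow]
    have h1 : (1:ℝ) ≤ 2 ^ (30 * N) := by
      calc (1:ℝ) = 1 ^ (30 * N) := (one_pow _).symm
        _ ≤ 2 ^ (30 * N) := pow_le_pow_left₀ (by norm_num) (by norm_num) _
    nlinarith
  have hr12 : r ≤ 1 / 2 := by linarith
  by_contra hcon
  push_neg at hcon
  have hzz : N + 1 ≤ numZeros (ZeroCountAux.F a) r := by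
    have : numZeros (ZeroCountAux.F a) r
        = numZeros (fun z => ∑' k : ℕ, a k * z ^ k) r := rfl
    omega
  have hconv' : ZeroCountAux.Conv a := hconv
  have htail : ∀ k, N < k → ‖a k‖ ≤ B * M := by
    intro k hk
    exact hcoeff k hk
  have hmain := ZeroCountAux.main_bound N a r (B * M) M hconv' hr0 hr12
    (by positivity) htail hhead hzz
  -- hmain : M ≤ 2 * (B * M) * r * 6 ^ N
  have h6 : (6:ℝ) ^ N ≤ 2 ^ (30 * N) := by
    calc (6:ℝ) ^ N ≤ (2 ^ 30 : ℝ) ^ N := by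
          apply pow_le_pow_left₀ (by norm_num)
          norm_num
      _ = 2 ^ (30 * N) := by
          rw [← pow_mul]
  have h1 : 1 ≤ 2 * B * r * 6 ^ N := by
    nlinarith [hmain, hMpos]
  have h2 : r * (2 * (B * 2 ^ (30 * N) + 1)) < 1 := by
    have : r < 1 / (B * 2 ^ (30 * N) + 1) / 2 := by rw [← hR₀]; exact hr2
    rw [div_div] at this
    calc r * (2 * (B * 2 ^ (30 * N) + 1))
        < (1 / ((B * 2 ^ (30 * N) + 1) * 2)) * (2 * (B * 2 ^ (30 * N) + 1)) := by
          apply mul_lt_mul_of_pos_right this (by positivity)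
      _ = 1 := by field_simp
  have h3 : 2 * B * r * 6 ^ N ≤ 2 * B * r * 2 ^ (30 * N) := by
    apply mul_le_mul_of_nonneg_left h6 (by positivity)
  nlinarith [h1, h2, h3, hB, hr0]
end

section
/- Let f be holomorphic on an open neighborhood of 0 ∈ ℂ, not identically zero near 0, and let μ be the order of vanishing of f at 0 (so f(z) = z^μ·g(z) with g holomorphic near 0 and g(0) ≠ 0). Then lim_{R→0⁺} ( log sup_{|z| ≤ R} |f(z)| − log sup_{|z| ≤ R/e} |f(z)| ) = μ. -/
open Filter Topology Metric

/-- The normalized sup `sup_{|z|≤R}|f| / R^μ` tends to `|g 0|` as `R → 0⁺`. -/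
lemma Q_tendsto_aux
    (s : Set ℂ) (hs : IsOpen s) (h0 : (0 : ℂ) ∈ s)
    (f g : ℂ → ℂ) (hf : DifferentiableOn ℂ f s) (hg : DifferentiableOn ℂ g s)
    (μ : ℕ) (hfac : ∀ z ∈ s, f z = z ^ μ * g z) :
    Tendsto (fun R : ℝ =>
        sSup ((fun z => ‖f z‖) '' closedBall (0 : ℂ) R) / R ^ μ)
      (𝓝[>] (0 : ℝ)) (𝓝 (‖g 0‖)) := by
  rw [Metric.tendsto_nhds]
  intro ε hε
  have hgc : ContinuousAt (fun z => ‖g z‖) 0 :=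
    continuous_norm.continuousAt.comp
      ((hg.continuousOn.continuousAt (hs.mem_nhds h0)))
  have hev : ∀ᶠ z in 𝓝 (0 : ℂ), |‖g z‖ - ‖g 0‖| < ε / 2 := by
    have := Metric.tendsto_nhds.mp hgc (ε / 2) (by linarith)
    simpa [Real.dist_eq] using this
  obtain ⟨δ1, hδ1, hδ1'⟩ := Metric.eventually_nhds_iff.mp hev
  obtain ⟨δ0, hδ0, hδ0'⟩ := Metric.isOpen_iff.mp hs 0 h0
  set δ := min δ0 δ1 with hδ
  have hδpos : 0 < δ := lt_min hδ0 hδ1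
  filter_upwards [Ioo_mem_nhdsGT_of_mem ⟨le_refl (0:ℝ), hδpos⟩] with R hR
  obtain ⟨hR0, hRδ⟩ := hR
  have hRδ0 : R < δ0 := lt_of_lt_of_le hRδ (min_le_left _ _)
  have hRδ1 : R < δ1 := lt_of_lt_of_le hRδ (min_le_right _ _)
  have hsub : closedBall (0 : ℂ) R ⊆ s :=
    (closedBall_subset_ball hRδ0).trans hδ0'
  set M := sSup ((fun z => ‖f z‖) '' closedBall (0 : ℂ) R) with hM
  have hbdd : BddAbove ((fun z => ‖f z‖) '' closedBall (0 : ℂ) R) :=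
    (((isCompact_closedBall (0:ℂ) R).image_of_continuousOn
      (continuous_norm.comp_continuousOn (hf.continuousOn.mono hsub)))).bddAbove
  have hne : ((fun z => ‖f z‖) '' closedBall (0 : ℂ) R).Nonempty :=
    ⟨_, ⟨0, mem_closedBall_self hR0.le, rfl⟩⟩
  have hRmem : (R : ℂ) ∈ closedBall (0 : ℂ) R := by
    simp [Complex.dist_eq, Complex.norm_real, Real.norm_eq_abs, abs_of_pos hR0]
  -- lower bound
  have hlow : R ^ μ * ‖g R‖ ≤ M := by
    have h1 : ‖f (R : ℂ)‖ ≤ M := le_csSup hbdd ⟨_, hRmem, rfl⟩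
    have h2 : f (R : ℂ) = (R:ℂ) ^ μ * g R := hfac _ (hsub hRmem)
    rw [h2] at h1
    simpa [norm_mul, norm_pow, Complex.norm_real, Real.norm_eq_abs, abs_of_pos hR0] using h1
  -- upper bound
  have hup : M ≤ R ^ μ * (‖g 0‖ + ε / 2) := by
    apply csSup_le hne
    rintro y ⟨z, hz, rfl⟩
    have hzR : ‖z‖ ≤ R := by
      simpa [Complex.dist_eq] using (mem_closedBall.mp hz)
    have hgz : ‖g z‖ ≤ ‖g 0‖ + ε / 2 := by
      have := hδ1' (y := z) (by
        simp only [Complex.dist_eq, sub_zero]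
        exact lt_of_le_of_lt hzR hRδ1)
      have := abs_sub_lt_iff.mp this
      linarith [this.1]
    calc ‖f z‖ = ‖z‖ ^ μ * ‖g z‖ := by
          rw [hfac z (hsub hz)]; simp [norm_mul, norm_pow]
      _ ≤ R ^ μ * (‖g 0‖ + ε / 2) := by
          apply mul_le_mul (pow_le_pow_left₀ (norm_nonneg z) hzR μ) hgz
            (norm_nonneg _) (by positivity)
  have hRpow : (0:ℝ) < R ^ μ := pow_pos hR0 μ
  have hgR : ‖g 0‖ - ε / 2 < ‖g R‖ := by
    have := hδ1' (y := (R:ℂ)) (by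
      simp only [Complex.dist_eq, sub_zero, Complex.norm_real, Real.norm_eq_abs, abs_of_pos hR0]
      exact hRδ1)
    have := abs_sub_lt_iff.mp this
    linarith [this.2]
  rw [Real.dist_eq, abs_sub_lt_iff]
  constructor
  · have : M / R ^ μ ≤ ‖g 0‖ + ε / 2 := by
      rw [div_le_iff₀ hRpow]; linarith [hup]
    linarith
  · have : ‖g 0‖ - ε / 2 < M / R ^ μ := by
      rw [lt_div_iff₀ hRpow]
      calc (‖g 0‖ - ε / 2) * R ^ μ < ‖g R‖ * R ^ μ := by
            apply mul_lt_mul_of_pos_right hgR hRpow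
        _ ≤ M := by rw [mul_comm]; exact hlow
    linarith

/-- If `f` vanishes to order `μ` at `0` then
`log sup_{|z|≤R}|f| − log sup_{|z|≤R/e}|f| → μ` as `R → 0⁺`. -/
theorem log_sup_ratio_tendsto_order
    (s : Set ℂ) (hs : IsOpen s) (h0 : (0 : ℂ) ∈ s)
    (f g : ℂ → ℂ) (hf : DifferentiableOn ℂ f s) (hg : DifferentiableOn ℂ g s)
    (μ : ℕ) (hfac : ∀ z ∈ s, f z = z ^ μ * g z) (hg0 : g 0 ≠ 0) :
    Tendsto
      (fun R : ℝ =>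
        Real.log (sSup ((fun z => ‖f z‖) '' closedBall (0 : ℂ) R)) -
          Real.log (sSup ((fun z => ‖f z‖) ''
            closedBall (0 : ℂ) (R / Real.exp 1))))
      (𝓝[>] (0 : ℝ)) (𝓝 (μ : ℝ)) := by
  have hQ := Q_tendsto_aux s hs h0 f g hf hg μ hfac
  set M : ℝ → ℝ := fun R => sSup ((fun z => ‖f z‖) '' closedBall (0 : ℂ) R)
    with hMdef
  set Q : ℝ → ℝ := fun R => M R / R ^ μ with hQdef
  have hg0pos : 0 < ‖g 0‖ := norm_pos_iff.mpr hg0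
  have hdiv : Tendsto (fun R : ℝ => R / Real.exp 1) (𝓝[>] (0:ℝ)) (𝓝[>] (0:ℝ)) := by
    apply tendsto_nhdsWithin_of_tendsto_nhds_of_eventually_within
    · have : Tendsto (fun R : ℝ => R / Real.exp 1) (𝓝 (0:ℝ)) (𝓝 (0 / Real.exp 1)) :=
        (tendsto_id.div_const _)
      simpa using this.mono_left nhdsWithin_le_nhds
    · filter_upwards [self_mem_nhdsWithin] with R (hR : 0 < R)
      exact div_pos hR (Real.exp_pos 1)
  have hQe : Tendsto (fun R => Q (R / Real.exp 1)) (𝓝[>] (0:ℝ))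
      (𝓝 (‖g 0‖)) := hQ.comp hdiv
  have hQpos : ∀ᶠ R in 𝓝[>] (0:ℝ), 0 < Q R := hQ.eventually (eventually_gt_nhds hg0pos)
  have hQepos : ∀ᶠ R in 𝓝[>] (0:ℝ), 0 < Q (R / Real.exp 1) :=
    hQe.eventually (eventually_gt_nhds hg0pos)
  have hlog : Tendsto (fun R => Real.log (Q R) - Real.log (Q (R / Real.exp 1)) + (μ:ℝ))
      (𝓝[>] (0:ℝ)) (𝓝 ((μ:ℝ))) := by
    have h1 : Tendsto (fun R => Real.log (Q R) - Real.log (Q (R / Real.exp 1)))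
        (𝓝[>] (0:ℝ)) (𝓝 (0:ℝ)) := by
      have hcont := (Real.continuousAt_log (ne_of_gt hg0pos)).tendsto
      have := (hcont.comp hQ).sub (hcont.comp hQe)
      simpa using this
    simpa using h1.add tendsto_const_nhds
  refine hlog.congr' ?_
  filter_upwards [self_mem_nhdsWithin, hQpos, hQepos] with R hR hQR hQRe
  have hR0 : (0:ℝ) < R := hR
  have hRe0 : (0:ℝ) < R / Real.exp 1 := div_pos hR0 (Real.exp_pos 1)
  have key : ∀ r : ℝ, 0 < r → 0 < Q r →
      Real.log (M r) = Real.log (Q r) + μ * Real.log r := by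
    intro r hr hQr
    have hrpow : (0:ℝ) < r ^ μ := pow_pos hr μ
    have hMr : M r = Q r * r ^ μ := by
      rw [hQdef]; field_simp
    rw [hMr, Real.log_mul (ne_of_gt hQr) (ne_of_gt hrpow), Real.log_pow]
  have h1 := key R hR0 hQR
  have h2 := key (R / Real.exp 1) hRe0 hQRe
  have h3 : Real.log (R / Real.exp 1) = Real.log R - 1 := by
    rw [Real.log_div (ne_of_gt hR0) (Real.exp_ne_zero 1), Real.log_exp]
  show Real.log (Q R) - Real.log (Q (R / Real.exp 1)) + (μ:ℝ) =
    Real.log (M R) - Real.log (M (R / Real.exp 1))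
  rw [h1, h2, h3]
  ring
end
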